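/- Let Q_μ be the quantile function of μ ∈ P₂(ℝ) and L > 0. Then Q_μ is L-Lipschitz on (0,1) if and only if R_μ⁺ satisfies the lower Lipschitz condition R_μ⁺(x) - R_μ⁺(y) ≥ (x-y)/L for all x ≥ y in the closure of (R_μ⁺)⁻¹((0,1)). -/

import Mathlib

open MeasureTheory Set

noncomputable def Rplus (μ : Measure ℝ) (x : ℝ) : ℝ := (μ (Iic x)).toReal

noncomputable def Quant (μ : Measure ℝ) (s : ℝ) : ℝ := sInf {x : ℝ | s ≤ Rplus μ x}

section Aux

open Filter Topology ProbabilityTheory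

variable (μ : Measure ℝ) [IsProbabilityMeasure μ]

lemma Rplus_eq_cdf : Rplus μ = ⇑(cdf μ) :=
  funext fun x => by rw [cdf_eq_real]; rfl

lemma Rplus_mono : Monotone (Rplus μ) := by
  rw [Rplus_eq_cdf]; exact (cdf μ).mono

lemma Rplus_nonneg (x : ℝ) : 0 ≤ Rplus μ x := by
  rw [Rplus_eq_cdf]; exact cdf_nonneg μ x

lemma Rplus_le_one (x : ℝ) : Rplus μ x ≤ 1 := by
  rw [Rplus_eq_cdf]; exact cdf_le_one μ x

lemma Rplus_rc (x : ℝ) : ContinuousWithinAt (Rplus μ) (Ici x) x := by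
  rw [Rplus_eq_cdf]; exact (cdf μ).right_continuous x

lemma Rplus_tendsto_atBot : Tendsto (Rplus μ) atBot (𝓝 0) := by
  rw [Rplus_eq_cdf]; exact tendsto_cdf_atBot μ

lemma Rplus_tendsto_atTop : Tendsto (Rplus μ) atTop (𝓝 1) := by
  rw [Rplus_eq_cdf]; exact tendsto_cdf_atTop μ

lemma bddBelow_quantSet {s : ℝ} (hs : 0 < s) : BddBelow {x : ℝ | s ≤ Rplus μ x} := by
  obtain ⟨x₀, hx₀⟩ := ((Rplus_tendsto_atBot μ).eventually_lt_const hs).exists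
  refine ⟨x₀, fun z hz => ?_⟩
  by_contra hzx
  push_neg at hzx
  exact absurd (le_trans hz (Rplus_mono μ hzx.le)) (not_le.2 hx₀)

lemma nonempty_quantSet {s : ℝ} (hs : s < 1) : {x : ℝ | s ≤ Rplus μ x}.Nonempty := by
  obtain ⟨x₀, hx₀⟩ := ((Rplus_tendsto_atTop μ).eventually_const_lt hs).exists
  exact ⟨x₀, hx₀.le⟩

lemma le_Rplus_of_quant_le {s x : ℝ} (hs1 : s < 1) (h : Quant μ s ≤ x) :
    s ≤ Rplus μ x := by
  have key : ∀ z, x < z → s ≤ Rplus μ z := by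
    intro z hz
    obtain ⟨w, hw, hwz⟩ := exists_lt_of_csInf_lt (nonempty_quantSet μ hs1) (lt_of_le_of_lt h hz)
    exact le_trans hw (Rplus_mono μ hwz.le)
  have htd : Tendsto (Rplus μ) (𝓝[>] x) (𝓝 (Rplus μ x)) :=
    (Rplus_rc μ x).mono_left (nhdsWithin_mono _ Ioi_subset_Ici_self)
  exact ge_of_tendsto htd (eventually_mem_nhdsWithin.mono fun z hz => key z hz)

lemma quant_le_of_le_Rplus {s x : ℝ} (hs0 : 0 < s) (h : s ≤ Rplus μ x) :
    Quant μ s ≤ x :=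
  csInf_le (bddBelow_quantSet μ hs0) h

lemma quant_mono {s₁ s₂ : ℝ} (hs₂ : 0 < s₂) (hs₁ : s₁ < 1) (h : s₂ ≤ s₁) :
    Quant μ s₂ ≤ Quant μ s₁ :=
  csInf_le_csInf (bddBelow_quantSet μ hs₂) (nonempty_quantSet μ hs₁)
    (fun x hx => le_trans h hx)

lemma Rplus_dichotomy {x : ℝ} (hx : x ∈ closure (Rplus μ ⁻¹' Ioo (0:ℝ) 1)) :
    (Rplus μ x = 1 ∧ (Rplus μ ⁻¹' Ioo (0:ℝ) 1) ⊆ Iio x) ∨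
    ∃ u : ℕ → ℝ, (∀ n, u n ∈ Rplus μ ⁻¹' Ioo (0:ℝ) 1 ∧ x ≤ u n) ∧
      Tendsto u atTop (𝓝 x) ∧ Tendsto (fun n => Rplus μ (u n)) atTop (𝓝 (Rplus μ x)) := by
  by_cases hc : ∀ δ : ℝ, 0 < δ → ∃ z, z ∈ Rplus μ ⁻¹' Ioo (0:ℝ) 1 ∧ x ≤ z ∧ z < x + δ
  · right
    have hpos : ∀ n : ℕ, (0:ℝ) < 1 / (n + 1) := fun n => by positivity
    choose u hu hxu hulz using fun n : ℕ => hc (1 / (n + 1)) (hpos n)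
    have htd : Tendsto u atTop (𝓝 x) := by
      have h1 : Tendsto (fun n : ℕ => x + 1 / (n + 1)) atTop (𝓝 (x + 0)) :=
        tendsto_const_nhds.add tendsto_one_div_add_atTop_nhds_zero_nat
      rw [add_zero] at h1
      exact tendsto_of_tendsto_of_tendsto_of_le_of_le tendsto_const_nhds h1
        (fun n => hxu n) (fun n => (hulz n).le)
    refine ⟨u, fun n => ⟨hu n, hxu n⟩, htd, ?_⟩
    have htd' : Tendsto u atTop (𝓝[Ici x] x) :=
      tendsto_nhdsWithin_iff.2 ⟨htd, Eventually.of_forall fun n => hxu n⟩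
    exact (Rplus_rc μ x).tendsto.comp htd'
  · left
    push_neg at hc
    obtain ⟨δ, hδ, hδ'⟩ := hc
    obtain ⟨w, hw, hwd⟩ := Metric.mem_closure_iff.1 hx δ hδ
    have hwx : w < x := by
      by_contra hxw
      push_neg at hxw
      have := hδ' w hw hxw
      rw [Real.dist_eq, abs_sub_lt_iff] at hwd
      linarith [hwd.1]
    have hRw : 0 < Rplus μ w := hw.1
    have key : ∀ t, x < t → t < x + δ → (1:ℝ) ≤ Rplus μ t := by
      intro t ht ht'
      have htS : t ∉ Rplus μ ⁻¹' Ioo (0:ℝ) 1 := by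
        intro htS
        exact absurd ht' (not_lt.2 (hδ' t htS ht.le))
      have h0 : 0 < Rplus μ t := lt_of_lt_of_le hRw (Rplus_mono μ (hwx.trans ht).le)
      by_contra h1
      push_neg at h1
      exact htS ⟨h0, h1⟩
    have hRx1 : (1:ℝ) ≤ Rplus μ x := by
      have htd : Tendsto (Rplus μ) (𝓝[>] x) (𝓝 (Rplus μ x)) :=
        (Rplus_rc μ x).mono_left (nhdsWithin_mono _ Ioi_subset_Ici_self)
      refine ge_of_tendsto htd ?_
      filter_upwards [Ioo_mem_nhdsGT_of_mem (⟨le_rfl, lt_add_of_pos_right x hδ⟩ :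
        x ∈ Ico x (x + δ))] with t ht
      exact key t ht.1 ht.2
    have hRx : Rplus μ x = 1 := le_antisymm (Rplus_le_one μ x) hRx1
    refine ⟨hRx, fun z hz => ?_⟩
    by_contra hxz
    rw [mem_Iio, not_lt] at hxz
    have h1 : Rplus μ z < 1 := hz.2
    have h2 : (1:ℝ) ≤ Rplus μ z := hRx ▸ Rplus_mono μ hxz
    linarith

end Aux

/-- `Q_μ` is `L`-Lipschitz on `(0,1)` iff `R_μ⁺` satisfies the lower `1/L`-Lipschitz
condition on the closure of `(R_μ⁺)⁻¹((0,1))`. -/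
theorem quantile_lipschitz_iff_cdf_lower_lipschitz (μ : Measure ℝ)
    [IsProbabilityMeasure μ] (hμ : Integrable (fun x : ℝ => x ^ 2) μ)
    (L : ℝ) (hL : 0 < L) :
    (∀ s₁ ∈ Ioo (0 : ℝ) 1, ∀ s₂ ∈ Ioo (0 : ℝ) 1,
        |Quant μ s₁ - Quant μ s₂| ≤ L * |s₁ - s₂|) ↔
      (∀ x ∈ closure ((Rplus μ) ⁻¹' (Ioo (0 : ℝ) 1)),
        ∀ y ∈ closure ((Rplus μ) ⁻¹' (Ioo (0 : ℝ) 1)),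
          y ≤ x → (x - y) / L ≤ Rplus μ x - Rplus μ y) := by
  classical
  set S : Set ℝ := (Rplus μ) ⁻¹' (Ioo (0 : ℝ) 1) with hS
  constructor
  · -- Lipschitz quantile → lower Lipschitz CDF
    intro hLip
    -- core inequality on S itself
    have hA : ∀ p ∈ S, ∀ q ∈ S, q ≤ p → p - q ≤ L * (Rplus μ p - Rplus μ q) := by
      intro p hp q hq hqp
      refine le_of_forall_pos_le_add fun ε hε => ?_
      set s : ℝ := min (Rplus μ p + ε / L) ((Rplus μ p + 1) / 2) with hs_def
      have hps : Rplus μ p < s := by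
        apply lt_min
        · have : 0 < ε / L := div_pos hε hL
          linarith
        · have : Rplus μ p < 1 := hp.2
          linarith
      have hs1 : s < 1 := by
        have h2 : s ≤ (Rplus μ p + 1) / 2 := min_le_right _ _
        have : Rplus μ p < 1 := hp.2
        linarith
      have hs0 : 0 < s := lt_trans hp.1 hps
      have hQq : Quant μ (Rplus μ q) ≤ q :=
        quant_le_of_le_Rplus μ hq.1 le_rfl
      have hpQ : p < Quant μ s := by
        by_contra h
        push_neg at h
        exact absurd (le_Rplus_of_quant_le μ hs1 h) (not_le.2 hps)
      have hqp' : Rplus μ q ≤ Rplus μ p := Rplus_mono μ hqp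
      have habs := hLip s ⟨hs0, hs1⟩ (Rplus μ q) ⟨hq.1, hq.2⟩
      have h1 : p - q < Quant μ s - Quant μ (Rplus μ q) := by linarith
      have h2 : Quant μ s - Quant μ (Rplus μ q) ≤ |Quant μ s - Quant μ (Rplus μ q)| :=
        le_abs_self _
      have h3 : |s - Rplus μ q| = s - Rplus μ q := abs_of_nonneg (by linarith)
      rw [h3] at habs
      have h4 : s ≤ Rplus μ p + ε / L := min_le_left _ _
      have h5 : L * (s - Rplus μ q) ≤ L * (Rplus μ p - Rplus μ q) + ε := by
        have : L * (s - Rplus μ q) ≤ L * (Rplus μ p + ε / L - Rplus μ q) := by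
          apply mul_le_mul_of_nonneg_left _ hL.le
          linarith
        have hLε : L * (ε / L) = ε := by field_simp
        calc L * (s - Rplus μ q) ≤ L * (Rplus μ p + ε / L - Rplus μ q) := this
          _ = L * (Rplus μ p - Rplus μ q) + L * (ε / L) := by ring
          _ = L * (Rplus μ p - Rplus μ q) + ε := by rw [hLε]
      linarith
    -- extension to z ∈ S, x ∈ closure S
    have hE : ∀ x ∈ closure S, ∀ z ∈ S, z < x → x - z ≤ L * (Rplus μ x - Rplus μ z) := by
      intro x hx z hz hzx
      rcases Rplus_dichotomy μ hx with ⟨hRx1, hSx⟩ | ⟨u, hu, hut, hRut⟩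
      · -- approximate x from the left by points of S
        obtain ⟨u, hu, hut⟩ := mem_closure_iff_seq_limit.1 hx
        have hev : ∀ᶠ n in Filter.atTop, z < u n :=
          hut.eventually_const_lt hzx
        have hbound : ∀ᶠ n in Filter.atTop,
            u n - z ≤ L * (Rplus μ x - Rplus μ z) := by
          filter_upwards [hev] with n hn
          have h1 := hA (u n) (hu n) z hz hn.le
          have h2 : Rplus μ (u n) ≤ Rplus μ x := Rplus_mono μ (hSx (hu n)).le
          have h3 : L * (Rplus μ (u n) - Rplus μ z) ≤ L * (Rplus μ x - Rplus μ z) := by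
            apply mul_le_mul_of_nonneg_left _ hL.le; linarith
          linarith
        exact le_of_tendsto (hut.sub_const z) hbound
      · have hev : ∀ᶠ n in Filter.atTop, z < u n := by
          filter_upwards with n
          exact lt_of_lt_of_le hzx (hu n).2
        refine le_of_tendsto_of_tendsto (hut.sub_const z)
          ((hRut.sub_const (Rplus μ z)).const_mul L) ?_
        filter_upwards [hev] with n hn
        exact hA (u n) (hu n).1 z hz hn.le
    -- full extension
    intro x hx y hy hyx
    rw [div_le_iff₀ hL, mul_comm]
    rcases eq_or_lt_of_le hyx with heq | hlt
    · rw [← heq]; simp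
    rcases Rplus_dichotomy μ hy with ⟨hRy1, hSy⟩ | ⟨v, hv, hvt, hRvt⟩
    · -- then closure S ⊆ Iic y, contradicting y < x
      have : x ∈ Iic y := by
        have h1 : closure S ⊆ closure (Iio y) := closure_mono hSy
        have h2 := h1 hx
        rwa [closure_Iio] at h2
      exact absurd hlt (not_lt.2 this)
    · have hev : ∀ᶠ n in Filter.atTop, v n < x := hvt.eventually_lt_const hlt
      refine le_of_tendsto_of_tendsto
        ((tendsto_const_nhds : Filter.Tendsto (fun _ : ℕ => x) _ _).sub hvt)
        (((tendsto_const_nhds : Filter.Tendsto (fun _ : ℕ => Rplus μ x) _ _).sub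
          hRvt).const_mul L) ?_
      filter_upwards [hev] with n hn
      exact hE x hx (v n) (hv n).1 hn
  · -- lower Lipschitz CDF → Lipschitz quantile
    intro hlow
    have key : ∀ s₁ ∈ Ioo (0:ℝ) 1, ∀ s₂ ∈ Ioo (0:ℝ) 1, s₂ ≤ s₁ →
        Quant μ s₁ - Quant μ s₂ ≤ L * (s₁ - s₂) := by
      intro s₁ hs₁ s₂ hs₂ h21
      set a := Quant μ s₂ with ha
      set b := Quant μ s₁ with hb
      have hab : a ≤ b := quant_mono μ hs₂.1 hs₁.2 h21
      rcases eq_or_lt_of_le hab with heq | hlt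
      · rw [← heq]
        have : L * (s₁ - s₂) ≥ 0 := mul_nonneg hL.le (by linarith)
        linarith
      · -- a < b
        have hRa2 : s₂ ≤ Rplus μ a := le_Rplus_of_quant_le μ hs₂.2 le_rfl
        have hRa1 : Rplus μ a < s₁ := by
          by_contra h
          push_neg at h
          exact absurd (quant_le_of_le_Rplus μ hs₁.1 h) (not_le.2 hlt)
        have haS : a ∈ S := ⟨lt_of_lt_of_le hs₂.1 hRa2, lt_trans hRa1 hs₁.2⟩
        refine le_of_forall_pos_le_add fun ε hε => ?_
        set ε' : ℝ := min ε ((b - a) / 2) with hε'_def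
        have hε'0 : 0 < ε' := lt_min hε (by linarith)
        have hε'ba : ε' < b - a := by
          have : ε' ≤ (b - a) / 2 := min_le_right _ _
          linarith
        set c : ℝ := b - ε' with hc
        have hac : a < c := by simp only [hc]; linarith
        have hcb : c < b := by simp only [hc]; linarith
        have hRc1 : Rplus μ c < s₁ := by
          by_contra h
          push_neg at h
          exact absurd (quant_le_of_le_Rplus μ hs₁.1 h) (not_le.2 hcb)
        have hRc0 : s₂ ≤ Rplus μ c := le_trans hRa2 (Rplus_mono μ hac.le)
        have hcS : c ∈ S := ⟨lt_of_lt_of_le hs₂.1 hRc0, lt_trans hRc1 hs₁.2⟩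
        have := hlow c (subset_closure hcS) a (subset_closure haS) hac.le
        rw [div_le_iff₀ hL] at this
        have h1 : Rplus μ c - Rplus μ a ≤ s₁ - s₂ := by linarith
        have h2 : (Rplus μ c - Rplus μ a) * L ≤ (s₁ - s₂) * L :=
          mul_le_mul_of_nonneg_right h1 hL.le
        have h3 : c - a ≤ (s₁ - s₂) * L := le_trans this h2
        have h4 : ε' ≤ ε := min_le_left _ _
        calc b - a = c - a + ε' := by simp only [hc]; ring
          _ ≤ (s₁ - s₂) * L + ε := by linarith
          _ = L * (s₁ - s₂) + ε := by ring
    intro s₁ hs₁ s₂ hs₂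
    rcases le_total s₂ s₁ with h | h
    · have h1 := key s₁ hs₁ s₂ hs₂ h
      have hmono : Quant μ s₂ ≤ Quant μ s₁ := quant_mono μ hs₂.1 hs₁.2 h
      rw [abs_of_nonneg (by linarith), abs_of_nonneg (by linarith)]
      exact h1
    · have h1 := key s₂ hs₂ s₁ hs₁ h
      have hmono : Quant μ s₁ ≤ Quant μ s₂ := quant_mono μ hs₁.1 hs₂.2 h
      rw [abs_of_nonpos (by linarith), abs_of_nonpos (by linarith)]
      linarith
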